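/- arXiv:2505.08136 — 6 statements merged into one kernel-verified Lean document; each statement's English description precedes it below -/
import Mathlib

section
/- There exists an optimal segmentation solution to the max-k-cut customer segmentation problem: for every k ≥ 1 there is an assignment x : V → Fin k such that f(x) ≥ f(y) for every assignment y : V → Fin k, and such that for all customers i, j ∈ V, s(i) = s(j) implies x(i) = x(j). -/
open Finset

variable {V : Type*} [Fintype V]

def wgt (s : V → ℤ × ℤ × ℤ) (i j : V) : ℤ :=
  |(s i).1 - (s j).1| + |(s i).2.1 - (s j).2.1| + |(s i).2.2 - (s j).2.2|

def objf (s : V → ℤ × ℤ × ℤ) {k : ℕ} (x : V → Fin k) : ℤ :=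
  ∑ i : V, ∑ j : V, if x i ≠ x j then wgt s i j else 0

def wgt' (s : V → ℤ × ℤ × ℤ) (a b : ℤ × ℤ × ℤ) : ℤ :=
  ∑ i ∈ univ.filter (fun i => s i = a), ∑ j ∈ univ.filter (fun j => s j = b), wgt s i j

def objR (s : V → ℤ × ℤ × ℤ) {k : ℕ} (y : ℤ × ℤ × ℤ → Fin k) : ℤ :=
  ∑ a ∈ univ.image s, ∑ b ∈ univ.image s, if y a ≠ y b then wgt' s a b else 0

lemma wgt_congr_left (s : V → ℤ × ℤ × ℤ) {i i' : V} (j : V) (h : s i = s i') :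
    wgt s i j = wgt s i' j := by simp [wgt, h]

lemma wgt_comm (s : V → ℤ × ℤ × ℤ) (i j : V) : wgt s i j = wgt s j i := by
  simp [wgt, abs_sub_comm]

lemma wgt_eq_zero (s : V → ℤ × ℤ × ℤ) {i j : V} (h : s i = s j) : wgt s i j = 0 := by
  simp [wgt, h]

/-- There exists an optimal segmentation solution to the max-k-cut problem. -/
theorem exists_optimal_segmentation_solution (s : V → ℤ × ℤ × ℤ) (k : ℕ) (hk : 1 ≤ k) :
    ∃ x : V → Fin k, (∀ y : V → Fin k, objf s x ≥ objf s y) ∧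
      (∀ i j : V, s i = s j → x i = x j) := by
  classical
  haveI : NeZero k := ⟨by omega⟩
  obtain ⟨x₀, -, hx₀⟩ := Finset.exists_max_image (univ : Finset (V → Fin k)) (objf s)
    ⟨fun _ => 0, mem_univ _⟩
  set T : Finset (V → Fin k) := univ.filter (fun x => ∀ y, objf s y ≤ objf s x) with hTdef
  have hT : T.Nonempty := ⟨x₀, by simpa [hTdef] using fun y => hx₀ y (mem_univ y)⟩
  set d : (V → Fin k) → ℕ :=
    fun x => (univ.filter (fun p : V × V => s p.1 = s p.2 ∧ x p.1 ≠ x p.2)).card with hddef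
  obtain ⟨x, hxT, hxmin⟩ := Finset.exists_min_image T d hT
  have hopt : ∀ y : V → Fin k, objf s y ≤ objf s x := by
    have := mem_filter.mp hxT
    exact this.2
  refine ⟨x, fun y => hopt y, ?_⟩
  by_contra hbad
  push_neg at hbad
  obtain ⟨i₀, j₀, hs₀, hne₀⟩ := hbad
  set a : ℤ × ℤ × ℤ := s i₀ with ha
  set F : Finset V := univ.filter (fun i => s i = a) with hF
  have hmemF : ∀ i, i ∈ F ↔ s i = a := by intro i; simp [hF]
  -- the "gain" function of a class choice, common to all members of fiber F
  set h : V → ℤ :=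
    fun i => ∑ j ∈ univ.filter (fun j => ¬ s j = a), (if x i ≠ x j then wgt s i₀ j else 0)
      with hhdef
  obtain ⟨j', hj'F, hj'max⟩ := Finset.exists_max_image F h ⟨i₀, (hmemF i₀).2 rfl⟩
  set y : V → Fin k := fun i => if s i = a then x j' else x i with hy
  have hyF : ∀ i ∈ F, y i = x j' := by intro i hi; simp [hy, (hmemF i).1 hi]
  have hyFc : ∀ i, i ∉ F → y i = x i := by
    intro i hi; simp only [hy]; rw [if_neg]; simpa [hmemF] using hi
  -- split objf into four blocks
  have split : ∀ z : V → Fin k, objf s z =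
      ((∑ i ∈ F, ∑ j ∈ F, (if z i ≠ z j then wgt s i j else 0)) +
        ∑ i ∈ F, ∑ j ∈ univ.filter (fun j => ¬ s j = a), (if z i ≠ z j then wgt s i j else 0)) +
      ((∑ i ∈ univ.filter (fun i => ¬ s i = a), ∑ j ∈ F, (if z i ≠ z j then wgt s i j else 0)) +
        ∑ i ∈ univ.filter (fun i => ¬ s i = a), ∑ j ∈ univ.filter (fun j => ¬ s j = a),
          (if z i ≠ z j then wgt s i j else 0)) := by
    intro z
    rw [objf, ← Finset.sum_filter_add_sum_filter_not univ (fun i => s i = a)]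
    congr 1
    · rw [← Finset.sum_add_distrib]
      refine Finset.sum_congr rfl fun i _ => ?_
      rw [← Finset.sum_filter_add_sum_filter_not univ (fun j => s j = a)]
    · rw [← Finset.sum_add_distrib]
      refine Finset.sum_congr rfl fun i _ => ?_
      rw [← Finset.sum_filter_add_sum_filter_not univ (fun j => s j = a)]
  have diag_zero : ∀ z : V → Fin k,
      (∑ i ∈ F, ∑ j ∈ F, (if z i ≠ z j then wgt s i j else 0)) = 0 := by
    intro z
    refine Finset.sum_eq_zero fun i hi => Finset.sum_eq_zero fun j hj => ?_
    have : wgt s i j = 0 := wgt_eq_zero s (((hmemF i).1 hi).trans ((hmemF j).1 hj).symm)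
    simp [this]
  have off_eq : ∀ z : V → Fin k,
      (∑ i ∈ univ.filter (fun i => ¬ s i = a), ∑ j ∈ F, (if z i ≠ z j then wgt s i j else 0)) =
      ∑ i ∈ F, ∑ j ∈ univ.filter (fun j => ¬ s j = a), (if z i ≠ z j then wgt s i j else 0) := by
    intro z
    rw [Finset.sum_comm]
    refine Finset.sum_congr rfl fun i _ => Finset.sum_congr rfl fun j _ => ?_
    rw [wgt_comm]
    congr 1
    simp [ne_comm]
  -- block B for x equals ∑ h, block B for y equals card F • h j'
  have hBx : ∀ i ∈ F,
      (∑ j ∈ univ.filter (fun j => ¬ s j = a), (if x i ≠ x j then wgt s i j else 0)) = h i := by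
    intro i hi
    simp only [hhdef]
    refine Finset.sum_congr rfl fun j _ => ?_
    rw [wgt_congr_left s j (((hmemF i).1 hi).trans ha)]
  have hBy : ∀ i ∈ F,
      (∑ j ∈ univ.filter (fun j => ¬ s j = a), (if y i ≠ y j then wgt s i j else 0)) = h j' := by
    intro i hi
    simp only [hhdef]
    refine Finset.sum_congr rfl fun j hj => ?_
    have hjF : j ∉ F := by
      simp only [hmemF]; simpa using (mem_filter.mp hj).2
    rw [hyF i hi, hyFc j hjF, wgt_congr_left s j (((hmemF i).1 hi).trans ha)]
  have hout : (∑ i ∈ univ.filter (fun i => ¬ s i = a), ∑ j ∈ univ.filter (fun j => ¬ s j = a),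
        (if y i ≠ y j then wgt s i j else 0)) =
      ∑ i ∈ univ.filter (fun i => ¬ s i = a), ∑ j ∈ univ.filter (fun j => ¬ s j = a),
        (if x i ≠ x j then wgt s i j else 0) := by
    refine Finset.sum_congr rfl fun i hi => Finset.sum_congr rfl fun j hj => ?_
    have hiF : i ∉ F := by simp only [hmemF]; simpa using (mem_filter.mp hi).2
    have hjF : j ∉ F := by simp only [hmemF]; simpa using (mem_filter.mp hj).2
    rw [hyFc i hiF, hyFc j hjF]
  have hgain : objf s x ≤ objf s y := by
    rw [split x, split y, diag_zero, diag_zero, off_eq, off_eq, hout,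
      Finset.sum_congr rfl hBx, Finset.sum_congr rfl hBy]
    have : (∑ i ∈ F, h i) ≤ ∑ _i ∈ F, h j' := Finset.sum_le_sum fun i hi => hj'max i hi
    linarith
  have hyT : y ∈ T := by
    rw [hTdef, mem_filter]
    exact ⟨mem_univ _, fun z => (hopt z).trans hgain⟩
  have hssub : (univ.filter (fun p : V × V => s p.1 = s p.2 ∧ y p.1 ≠ y p.2)) ⊂
      (univ.filter (fun p : V × V => s p.1 = s p.2 ∧ x p.1 ≠ x p.2)) := by
    rw [Finset.ssubset_iff_of_subset]
    · refine ⟨(i₀, j₀), ?_, ?_⟩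
      · simp only [mem_filter, mem_univ, true_and]
        exact ⟨ha ▸ hs₀, hne₀⟩
      · simp only [mem_filter, mem_univ, true_and, not_and, not_not]
        intro _
        have h1 : y i₀ = x j' := hyF i₀ ((hmemF i₀).2 ha.symm)
        have h2 : y j₀ = x j' := hyF j₀ ((hmemF j₀).2 hs₀.symm)
        rw [h1, h2]
    · intro p hp
      simp only [mem_filter, mem_univ, true_and] at hp ⊢
      obtain ⟨hsp, hnep⟩ := hp
      refine ⟨hsp, ?_⟩
      by_cases hpa : s p.1 = a
      · exfalso
        exact hnep (by rw [hyF p.1 ((hmemF p.1).2 hpa), hyF p.2 ((hmemF p.2).2 (hsp ▸ hpa))])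
      · have hp2a : ¬ s p.2 = a := fun hc => hpa (hsp.trans hc)
        rwa [hyFc p.1 (fun hc => hpa ((hmemF p.1).1 hc)),
          hyFc p.2 (fun hc => hp2a ((hmemF p.2).1 hc))] at hnep
  have hdlt : d y < d x := Finset.card_lt_card hssub
  have := hxmin y hyT
  omega
end

section
/- Lifting an optimal reduced solution yields an optimal original solution (correctness of Procedure 2): for every k ≥ 1, if y : (ℤ × ℤ × ℤ) → Fin k satisfies f_R(y) ≥ f_R(z) for every assignment z : (ℤ × ℤ × ℤ) → Fin k, then the assignment x = y ∘ s : V → Fin k satisfies f(x) ≥ f(x') for every assignment x' : V → Fin k; moreover this x is a segmentation solution. -/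
open Finset

variable {V : Type*} [Fintype V]

def dd (a b : ℤ × ℤ × ℤ) : ℤ :=
  |a.1 - b.1| + |a.2.1 - b.2.1| + |a.2.2 - b.2.2|

omit [Fintype V] in
lemma wgt_eq_dd (s : V → ℤ × ℤ × ℤ) (i j : V) : wgt s i j = dd (s i) (s j) := rfl

lemma dd_self (a : ℤ × ℤ × ℤ) : dd a a = 0 := by simp [dd]

lemma dd_comm (a b : ℤ × ℤ × ℤ) : dd a b = dd b a := by
  simp [dd, abs_sub_comm]

lemma objR_eq (s : V → ℤ × ℤ × ℤ) {k : ℕ} (y : ℤ × ℤ × ℤ → Fin k) :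
    objR s y = objf s (y ∘ s) := by
  unfold objR objf wgt'
  simp only [Function.comp]
  rw [← Finset.sum_fiberwise_of_maps_to (g := s) (t := univ.image s)
      (fun i _ => mem_image_of_mem s (mem_univ i))
      (fun i => ∑ j : V, if y (s i) ≠ y (s j) then wgt s i j else 0)]
  refine Finset.sum_congr rfl fun a ha => ?_
  have inner : ∀ i : V, (∑ j : V, if y (s i) ≠ y (s j) then wgt s i j else 0)
      = ∑ b ∈ univ.image s, ∑ j ∈ univ.filter (fun j => s j = b),
          if y (s i) ≠ y (s j) then wgt s i j else 0 :=
    fun i => (Finset.sum_fiberwise_of_maps_to (fun j _ => mem_image_of_mem s (mem_univ j)) _).symm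
  rw [Finset.sum_congr rfl fun i _ => inner i, Finset.sum_comm]
  refine Finset.sum_congr rfl fun b hb => ?_
  have key : ∀ i ∈ univ.filter (fun i => s i = a), ∀ j ∈ univ.filter (fun j => s j = b),
      (if y (s i) ≠ y (s j) then wgt s i j else 0) = if y a ≠ y b then wgt s i j else 0 := by
    intro i hi j hj
    simp only [mem_filter] at hi hj
    rw [hi.2, hj.2]
  rw [Finset.sum_congr rfl fun i hi => Finset.sum_congr rfl fun j hj => key i hi j hj]
  split_ifs with h
  · rfl
  · simp

lemma exists_merge (s : V → ℤ × ℤ × ℤ) {k : ℕ} (hk : 1 ≤ k) (a : ℤ × ℤ × ℤ)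
    (x : V → Fin k) : ∃ g : Fin k,
    objf s (fun i => if s i = a then g else x i) ≥ objf s x := by
  classical
  haveI : Nonempty (Fin k) := ⟨⟨0, hk⟩⟩
  set Aa := univ.filter (fun i => s i = a) with hAa
  set Ac := univ.filter (fun i => ¬ s i = a) with hAc
  -- the gain function for a single group choice
  set H : Fin k → ℤ := fun g => ∑ j ∈ Ac, if g ≠ x j then dd a (s j) else 0 with hH
  obtain ⟨g, -, hg⟩ := Finset.exists_max_image (univ : Finset (Fin k)) H univ_nonempty
  refine ⟨g, ?_⟩
  -- decomposition of objf for any assignment agreeing with x off class a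
  have decomp : ∀ χ : V → Fin k, (∀ j ∈ Ac, χ j = x j) →
      objf s χ = (∑ i ∈ Ac, ∑ j ∈ Ac, if χ i ≠ χ j then wgt s i j else 0)
        + 2 * ∑ i ∈ Aa, H (χ i) := by
    intro χ hχ
    unfold objf
    rw [← Finset.sum_filter_add_sum_filter_not univ (fun i => s i = a)
        (fun i => ∑ j : V, if χ i ≠ χ j then wgt s i j else 0)]
    have inner : ∀ i : V, (∑ j : V, if χ i ≠ χ j then wgt s i j else 0)
        = (∑ j ∈ Aa, if χ i ≠ χ j then wgt s i j else 0)
          + ∑ j ∈ Ac, if χ i ≠ χ j then wgt s i j else 0 := by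
      intro i
      rw [← Finset.sum_filter_add_sum_filter_not univ (fun j => s j = a)]
    have blockAaAa : (∑ i ∈ Aa, ∑ j ∈ Aa, if χ i ≠ χ j then wgt s i j else 0) = 0 := by
      refine Finset.sum_eq_zero fun i hi => Finset.sum_eq_zero fun j hj => ?_
      simp only [hAa, mem_filter] at hi hj
      rw [wgt_eq_dd, hi.2, hj.2, dd_self]
      simp
    have blockAaAc : ∀ i ∈ Aa, (∑ j ∈ Ac, if χ i ≠ χ j then wgt s i j else 0) = H (χ i) := by
      intro i hi
      simp only [hAa, mem_filter] at hi
      refine Finset.sum_congr rfl fun j hj => ?_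
      rw [wgt_eq_dd, hi.2, hχ j hj]
    have blockAcAa : ∀ i ∈ Ac, (∑ j ∈ Aa, if χ i ≠ χ j then wgt s i j else 0)
        = ∑ j ∈ Aa, if χ j ≠ χ i then dd a (s i) else 0 := by
      intro i hi
      refine Finset.sum_congr rfl fun j hj => ?_
      simp only [hAa, mem_filter] at hj
      rw [wgt_eq_dd, hj.2, dd_comm]
      exact if_congr ne_comm rfl rfl
    have swap : (∑ i ∈ Ac, ∑ j ∈ Aa, if χ j ≠ χ i then dd a (s i) else 0)
        = ∑ i ∈ Aa, H (χ i) := by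
      rw [Finset.sum_comm]
      refine Finset.sum_congr rfl fun i hi => ?_
      simp only [hAa, mem_filter] at hi
      refine Finset.sum_congr rfl fun j hj => ?_
      rw [hχ j hj]
    calc (∑ i ∈ Aa, ∑ j : V, if χ i ≠ χ j then wgt s i j else 0)
          + (∑ i ∈ Ac, ∑ j : V, if χ i ≠ χ j then wgt s i j else 0)
        = ((∑ i ∈ Aa, ∑ j ∈ Aa, if χ i ≠ χ j then wgt s i j else 0)
            + ∑ i ∈ Aa, ∑ j ∈ Ac, if χ i ≠ χ j then wgt s i j else 0)
          + ((∑ i ∈ Ac, ∑ j ∈ Aa, if χ i ≠ χ j then wgt s i j else 0)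
            + ∑ i ∈ Ac, ∑ j ∈ Ac, if χ i ≠ χ j then wgt s i j else 0) := by
          rw [← Finset.sum_add_distrib, ← Finset.sum_add_distrib]
          congr 1 <;> exact Finset.sum_congr rfl fun i _ => inner i
      _ = (∑ i ∈ Ac, ∑ j ∈ Ac, if χ i ≠ χ j then wgt s i j else 0)
            + 2 * ∑ i ∈ Aa, H (χ i) := by
          rw [blockAaAa, Finset.sum_congr rfl blockAaAc, Finset.sum_congr rfl blockAcAa, swap]
          ring
  set x' : V → Fin k := fun i => if s i = a then g else x i with hx'
  have hx'Ac : ∀ j ∈ Ac, x' j = x j := by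
    intro j hj
    simp only [hAc, mem_filter] at hj
    simp [hx', hj.2]
  rw [decomp x (fun _ _ => rfl), decomp x' hx'Ac]
  have e1 : (∑ i ∈ Ac, ∑ j ∈ Ac, if x' i ≠ x' j then wgt s i j else 0)
      = ∑ i ∈ Ac, ∑ j ∈ Ac, if x i ≠ x j then wgt s i j else 0 := by
    refine Finset.sum_congr rfl fun i hi => Finset.sum_congr rfl fun j hj => ?_
    rw [hx'Ac i hi, hx'Ac j hj]
  have e2 : (∑ i ∈ Aa, H (x' i)) ≥ ∑ i ∈ Aa, H (x i) := by
    refine Finset.sum_le_sum fun i hi => ?_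
    simp only [hAa, mem_filter] at hi
    have : x' i = g := by simp [hx', hi.2]
    rw [this]
    exact hg (x i) (mem_univ _)
  rw [e1]
  linarith

lemma exists_seg (s : V → ℤ × ℤ × ℤ) {k : ℕ} (hk : 1 ≤ k) (x : V → Fin k) :
    ∃ x'' : V → Fin k, objf s x'' ≥ objf s x ∧ ∀ i j : V, s i = s j → x'' i = x'' j := by
  classical
  set B : (V → Fin k) → Finset (V × V) :=
    fun χ => univ.filter (fun p : V × V => s p.1 = s p.2 ∧ χ p.1 ≠ χ p.2) with hB
  suffices h : ∀ n : ℕ, ∀ χ : V → Fin k, (B χ).card ≤ n →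
      ∃ x'' : V → Fin k, objf s x'' ≥ objf s χ ∧ ∀ i j : V, s i = s j → x'' i = x'' j by
    exact h (B x).card x le_rfl
  intro n
  induction n with
  | zero =>
    intro χ hχ
    refine ⟨χ, le_refl _, fun i j hij => ?_⟩
    by_contra hne
    have : (i, j) ∈ B χ := by simp [hB, hij, hne]
    have := Finset.card_pos.mpr ⟨_, this⟩
    omega
  | succ n ih =>
    intro χ hχ
    by_cases hempty : B χ = ∅
    · refine ⟨χ, le_refl _, fun i j hij => ?_⟩
      by_contra hne
      have : (i, j) ∈ B χ := by simp [hB, hij, hne]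
      rw [hempty] at this
      exact absurd this (notMem_empty _)
    · obtain ⟨p, hp⟩ := Finset.nonempty_iff_ne_empty.mpr hempty
      simp only [hB, mem_filter] at hp
      obtain ⟨g, hg⟩ := exists_merge s hk (s p.1) χ
      set χ' : V → Fin k := fun i => if s i = s p.1 then g else χ i with hχ'
      have hsub : B χ' ⊆ B χ := by
        intro q hq
        simp only [hB, mem_filter] at hq ⊢
        refine ⟨mem_univ _, hq.2.1, ?_⟩
        by_cases h1 : s q.1 = s p.1
        · exfalso
          have h2 : s q.2 = s p.1 := hq.2.1 ▸ h1
          apply hq.2.2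
          simp [hχ', h1, h2]
        · have h2 : ¬ s q.2 = s p.1 := fun h => h1 (hq.2.1.trans h)
          intro hc
          apply hq.2.2
          simp [hχ', h1, h2, hc]
      have hpnot : p ∉ B χ' := by
        simp only [hB, mem_filter, not_and]
        intro _ _
        simp [hχ', hp.2.1]
      have hcard : (B χ').card < (B χ).card := by
        refine Finset.card_lt_card ⟨hsub, fun hs => hpnot (hs ?_)⟩
        simp only [hB, mem_filter]
        exact ⟨mem_univ _, hp.2.1, hp.2.2⟩
      obtain ⟨x'', h1, h2⟩ := ih χ' (by omega)
      exact ⟨x'', le_trans hg h1, h2⟩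

/-- Lifting an optimal reduced solution yields an optimal original solution, which
moreover is a segmentation solution. -/
theorem lift_of_optimal_reduced_is_optimal (s : V → ℤ × ℤ × ℤ) (k : ℕ) (hk : 1 ≤ k)
    (y : ℤ × ℤ × ℤ → Fin k) (hy : ∀ z : ℤ × ℤ × ℤ → Fin k, objR s y ≥ objR s z) :
    (∀ x' : V → Fin k, objf s (y ∘ s) ≥ objf s x') ∧
      (∀ i j : V, s i = s j → (y ∘ s) i = (y ∘ s) j) := by
  classical
  constructor
  · intro x'
    obtain ⟨x'', hge, hseg⟩ := exists_seg s hk x'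
    set z : ℤ × ℤ × ℤ → Fin k :=
      fun a => if h : ∃ i, s i = a then x'' h.choose else y a with hz
    have hzs : z ∘ s = x'' := by
      funext i
      have h : ∃ j, s j = s i := ⟨i, rfl⟩
      simp only [Function.comp_apply, hz, dif_pos h]
      exact hseg _ _ h.choose_spec
    calc objf s x' ≤ objf s x'' := hge
      _ = objf s (z ∘ s) := by rw [hzs]
      _ = objR s z := (objR_eq s z).symm
      _ ≤ objR s y := hy z
      _ = objf s (y ∘ s) := objR_eq s y
  · intro i j hij
    simp [hij]
end

section
/- Every segmentation solution factors through the score map with equal objective value: for every k ≥ 1, if x : V → Fin k is a segmentation solution, then there exists an assignment y : (ℤ × ℤ × ℤ) → Fin k such that y ∘ s = x and f_R(y) = f(x). -/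
open Finset

variable {V : Type*} [Fintype V]

/-- Every segmentation solution factors through the score map with equal objective value. -/
theorem segmentation_solution_factors (s : V → ℤ × ℤ × ℤ) (k : ℕ) (hk : 1 ≤ k)
    (x : V → Fin k) (hx : ∀ i j : V, s i = s j → x i = x j) :
    ∃ y : ℤ × ℤ × ℤ → Fin k, y ∘ s = x ∧ objR s y = objf s x := by
  classical
  set y : ℤ × ℤ × ℤ → Fin k := fun a =>
    if h : ∃ i, s i = a then x h.choose else ⟨0, hk⟩ with hy
  have hys : ∀ i, y (s i) = x i := by
    intro i
    have h : ∃ j, s j = s i := ⟨i, rfl⟩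
    simp only [hy, dif_pos h]
    exact hx _ _ h.choose_spec
  refine ⟨y, funext hys, ?_⟩
  unfold objR objf wgt'
  rw [← Finset.sum_fiberwise_of_maps_to (g := s) (t := univ.image s)
      (fun i _ => mem_image_of_mem s (mem_univ i))
      (fun i => ∑ j : V, if x i ≠ x j then wgt s i j else 0)]
  refine Finset.sum_congr rfl fun a _ => ?_
  have key : ∀ i ∈ univ.filter (fun i => s i = a),
      (∑ j : V, if x i ≠ x j then wgt s i j else 0)
      = ∑ b ∈ univ.image s, ∑ j ∈ univ.filter (fun j => s j = b),
          if y a ≠ y b then wgt s i j else 0 := by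
    intro i hi
    have hia : s i = a := (mem_filter.mp hi).2
    rw [← Finset.sum_fiberwise_of_maps_to (g := s) (t := univ.image s)
        (fun j _ => mem_image_of_mem s (mem_univ j))
        (fun j => if x i ≠ x j then wgt s i j else 0)]
    refine Finset.sum_congr rfl fun b _ => Finset.sum_congr rfl fun j hj => ?_
    have hjb : s j = b := (mem_filter.mp hj).2
    rw [← hia, ← hjb, hys i, hys j]
  rw [Finset.sum_congr rfl key, Finset.sum_comm]
  refine Finset.sum_congr rfl fun b _ => ?_
  by_cases h : y a ≠ y b <;> simp [h]
end

section
/- Exchange identity for moving a vertex to the group of a same-score vertex: for every k ≥ 1, every assignment x : V → Fin k, and all customers i, j ∈ V with s(i) = s(j) and x(i) ≠ x(j), the assignment x' obtained from x by reassigning j to group x(i) (i.e., x' = Function.update x j (x(i))) satisfies f(x') = f(x) − 2·S_q + 2·S_p, where S_p = ∑_{v ∈ V, x(v) ≠ x(i)} w(i,v) and S_q = ∑_{v ∈ V, x(v) ≠ x(j)} w(j,v). -/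
open Finset

variable {V : Type*} [Fintype V]

lemma objf_split [DecidableEq V] (s : V → ℤ × ℤ × ℤ) {k : ℕ} (y : V → Fin k) (j : V) :
    objf s y = (∑ a ∈ univ.erase j, ∑ b ∈ univ.erase j, if y a ≠ y b then wgt s a b else 0)
      + (∑ a ∈ univ.erase j, if y a ≠ y j then wgt s a j else 0)
      + (∑ b ∈ univ.erase j, if y j ≠ y b then wgt s j b else 0)
      + (if y j ≠ y j then wgt s j j else 0) := by
  have h1 : ∀ a : V, (∑ b : V, if y a ≠ y b then wgt s a b else 0) =
      (∑ b ∈ univ.erase j, if y a ≠ y b then wgt s a b else 0)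
        + (if y a ≠ y j then wgt s a j else 0) :=
    fun a => (Finset.sum_erase_add _ _ (Finset.mem_univ j)).symm
  unfold objf
  simp_rw [h1]
  rw [Finset.sum_add_distrib,
    ← Finset.sum_erase_add _ (fun a => ∑ b ∈ univ.erase j,
        if y a ≠ y b then wgt s a b else 0) (Finset.mem_univ j),
    ← Finset.sum_erase_add _ (fun a => if y a ≠ y j then wgt s a j else 0) (Finset.mem_univ j)]
  ring

/-- Exchange identity for moving a vertex to the group of a same-score vertex. -/
theorem exchange_identity [DecidableEq V] (s : V → ℤ × ℤ × ℤ) (k : ℕ) (hk : 1 ≤ k)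
    (x : V → Fin k) (i j : V) (hs : s i = s j) (hx : x i ≠ x j) :
    objf s (Function.update x j (x i)) =
      objf s x - 2 * (∑ v : V, if x v ≠ x j then wgt s j v else 0)
        + 2 * (∑ v : V, if x v ≠ x i then wgt s i v else 0) := by
  classical
  have hij : i ≠ j := fun h => hx (by rw [h])
  set x' := Function.update x j (x i) with hx'def
  have hx'j : x' j = x i := Function.update_self _ _ _
  have hx'v : ∀ v : V, v ≠ j → x' v = x v := fun v hv => Function.update_of_ne hv _ _
  have hw_symm : ∀ a b : V, wgt s a b = wgt s b a := by
    intro a b; simp [wgt, abs_sub_comm]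
  have hwij : wgt s i j = 0 := by simp [wgt, hs]
  have hwjv : ∀ v : V, wgt s i v = wgt s j v := by intro v; simp [wgt, hs]
  rw [objf_split s x' j, objf_split s x j]
  -- the double sum over erase j agrees
  have hA : (∑ a ∈ univ.erase j, ∑ b ∈ univ.erase j, if x' a ≠ x' b then wgt s a b else 0)
      = (∑ a ∈ univ.erase j, ∑ b ∈ univ.erase j, if x a ≠ x b then wgt s a b else 0) := by
    refine Finset.sum_congr rfl fun a ha => Finset.sum_congr rfl fun b hb => ?_
    rw [hx'v a (Finset.ne_of_mem_erase ha), hx'v b (Finset.ne_of_mem_erase hb)]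
  -- the column sum for x'
  have hP' : (∑ a ∈ univ.erase j, if x' a ≠ x' j then wgt s a j else 0)
      = (∑ a ∈ univ.erase j, if x a ≠ x i then wgt s j a else 0) := by
    refine Finset.sum_congr rfl fun a ha => ?_
    rw [hx'v a (Finset.ne_of_mem_erase ha), hx'j, hw_symm a j]
  have hQ' : (∑ b ∈ univ.erase j, if x' j ≠ x' b then wgt s j b else 0)
      = (∑ b ∈ univ.erase j, if x b ≠ x i then wgt s j b else 0) := by
    refine Finset.sum_congr rfl fun b hb => ?_
    rw [hx'v b (Finset.ne_of_mem_erase hb), hx'j]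
    simp only [ne_comm]
  have hP : (∑ a ∈ univ.erase j, if x a ≠ x j then wgt s a j else 0)
      = (∑ a ∈ univ.erase j, if x a ≠ x j then wgt s j a else 0) := by
    refine Finset.sum_congr rfl fun a ha => ?_
    rw [hw_symm a j]
  -- relate S_q to the erase sum
  have hSq : (∑ v : V, if x v ≠ x j then wgt s j v else 0)
      = (∑ v ∈ univ.erase j, if x v ≠ x j then wgt s j v else 0) := by
    rw [← Finset.sum_erase_add _ _ (Finset.mem_univ j)]
    simp
  have hSp : (∑ v : V, if x v ≠ x i then wgt s i v else 0)
      = (∑ v ∈ univ.erase j, if x v ≠ x i then wgt s j v else 0) := by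
    rw [← Finset.sum_erase_add _ _ (Finset.mem_univ j)]
    simp only [hwjv]
    have : (if x j ≠ x i then wgt s j j else 0) = 0 := by simp [wgt]
    rw [this, add_zero]
  have hQ : (∑ b ∈ univ.erase j, if x j ≠ x b then wgt s j b else 0)
      = (∑ b ∈ univ.erase j, if x b ≠ x j then wgt s j b else 0) := by
    refine Finset.sum_congr rfl fun b hb => ?_
    simp only [ne_comm]
  rw [hA, hP', hQ', hSq, hSp, hP, hQ]
  simp only [ne_eq, not_true_eq_false, if_false]
  ring
end

section
/- Moving a vertex to the group of a same-score vertex preserves optimality: for every k ≥ 1, if x : V → Fin k satisfies f(x) ≥ f(y) for every assignment y : V → Fin k, and i, j ∈ V satisfy s(i) = s(j) and x(i) ≠ x(j), then the assignment x' = Function.update x j (x(i)) also satisfies f(x') ≥ f(y) for every assignment y : V → Fin k (equivalently, f(x') = f(x)). -/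
open Finset

variable {V : Type*} [Fintype V]

lemma wgt_congr (s : V → ℤ × ℤ × ℤ) {a b a' b' : V} (ha : s a = s a') (hb : s b = s b') :
    wgt s a b = wgt s a' b' := by simp [wgt, ha, hb]

lemma wgt_zero (s : V → ℤ × ℤ × ℤ) {a b : V} (h : s a = s b) : wgt s a b = 0 := by
  simp [wgt, h]

/-- Moving a vertex to the group of a same-score vertex preserves optimality. -/
theorem move_preserves_optimality [DecidableEq V] (s : V → ℤ × ℤ × ℤ) (k : ℕ) (hk : 1 ≤ k)
    (x : V → Fin k) (hopt : ∀ y : V → Fin k, objf s x ≥ objf s y)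
    (i j : V) (hs : s i = s j) (hx : x i ≠ x j) :
    ∀ y : V → Fin k, objf s (Function.update x j (x i)) ≥ objf s y := by
  have hij : i ≠ j := fun h => hx (by rw [h])
  set σ := Equiv.swap i j with hσdef
  have hσ : ∀ a, s (σ a) = s a := by
    intro a
    rcases eq_or_ne a i with rfl | hai
    · rw [hσdef, Equiv.swap_apply_left, hs]
    rcases eq_or_ne a j with rfl | haj
    · rw [hσdef, Equiv.swap_apply_right, hs]
    · rw [hσdef, Equiv.swap_apply_of_ne_of_ne hai haj]
  set x' := Function.update x j (x i) with hx'def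
  set y'' := Function.update x i (x j) with hy''def
  have hx'i : x' i = x i := Function.update_of_ne hij _ x
  have hx'j : x' j = x i := Function.update_self _ _ _
  have hx'o : ∀ b, b ≠ j → x' b = x b := fun b hb => Function.update_of_ne hb _ x
  have hy''i : y'' i = x j := Function.update_self _ _ _
  have hy''o : ∀ b, b ≠ i → y'' b = x b := fun b hb => Function.update_of_ne hb _ x
  have hσi : σ i = j := Equiv.swap_apply_left i j
  have hσj : σ j = i := Equiv.swap_apply_right i j
  have hσo : ∀ b, b ≠ i → b ≠ j → σ b = b := fun b h1 h2 =>
    Equiv.swap_apply_of_ne_of_ne h1 h2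
  have hwij : wgt s i j = 0 := wgt_zero s hs
  have hwji : wgt s j i = 0 := wgt_zero s hs.symm
  have key : ∀ a b : V,
      ((if x' a ≠ x' b then wgt s a b else 0) + (if y'' a ≠ y'' b then wgt s a b else 0))
        = (if x a ≠ x b then wgt s a b else 0)
          + (if x (σ a) ≠ x (σ b) then wgt s a b else 0) := by
    intro a b
    rcases eq_or_ne a i with hai | hai
    · rcases eq_or_ne b i with hbi | hbi
      · rw [hai, hbi, hx'i, hy''i, hσi]
      rcases eq_or_ne b j with hbj | hbj
      · rw [hai, hbj]
        simp [hwij]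
      · rw [hai, hx'i, hx'o b hbj, hy''i, hy''o b hbi, hσi, hσo b hbi hbj]
    rcases eq_or_ne a j with haj | haj
    · rcases eq_or_ne b i with hbi | hbi
      · rw [haj, hbi]
        simp [hwji]
      rcases eq_or_ne b j with hbj | hbj
      · rw [haj, hbj, hx'j, hy''o j hij.symm, hσj]
        simp
      · rw [haj, hx'j, hx'o b hbj, hy''o j hij.symm, hy''o b hbi, hσj, hσo b hbi hbj]
        exact add_comm _ _
    · rcases eq_or_ne b i with hbi | hbi
      · rw [hbi, hx'o a haj, hx'i, hy''o a hai, hy''i, hσo a hai haj, hσi]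
      rcases eq_or_ne b j with hbj | hbj
      · rw [hbj, hx'o a haj, hx'j, hy''o a hai, hy''o j hij.symm, hσo a hai haj, hσj]
        exact add_comm _ _
      · rw [hx'o a haj, hx'o b hbj, hy''o a hai, hy''o b hbi, hσo a hai haj, hσo b hbi hbj]
  have hsum : objf s x' + objf s y'' = 2 * objf s x := by
    have h1 : objf s x' + objf s y''
        = ∑ a : V, ∑ b : V, ((if x a ≠ x b then wgt s a b else 0)
            + (if x (σ a) ≠ x (σ b) then wgt s a b else 0)) := by
      simp only [objf, ← Finset.sum_add_distrib]
      exact Finset.sum_congr rfl fun a _ => Finset.sum_congr rfl fun b _ => key a b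
    have h2 : (∑ a : V, ∑ b : V, (if x (σ a) ≠ x (σ b) then wgt s a b else 0))
        = objf s x := by
      have hre : (∑ a : V, ∑ b : V, (if x (σ a) ≠ x (σ b) then wgt s a b else 0))
          = ∑ a : V, ∑ b : V, (if x (σ a) ≠ x (σ b) then wgt s (σ a) (σ b) else 0) :=
        Finset.sum_congr rfl fun a _ => Finset.sum_congr rfl fun b _ => by
          by_cases h : x (σ a) ≠ x (σ b) <;>
            simp [h, wgt_congr s (hσ a).symm (hσ b).symm]
      rw [hre, objf, ← Equiv.sum_comp σ (fun a => ∑ b : V, if x a ≠ x b then wgt s a b else 0)]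
      exact Finset.sum_congr rfl fun a _ =>
        Equiv.sum_comp σ (fun b => if x (σ a) ≠ x b then wgt s (σ a) b else 0)
    rw [h1, Finset.sum_congr rfl fun a (_ : a ∈ univ) => Finset.sum_add_distrib,
      Finset.sum_add_distrib, h2]
    rw [show (∑ a : V, ∑ b : V, if x a ≠ x b then wgt s a b else 0) = objf s x from rfl]
    ring
  intro y
  have h3 := hopt y''
  have h4 := hopt y
  linarith
end

section
/- Collecting all vertices of a given score into one group preserves optimality: for every k ≥ 1, if x : V → Fin k satisfies f(x) ≥ f(y) for every assignment y : V → Fin k, and i ∈ V, then the assignment x' defined by x'(v) = x(i) whenever s(v) = s(i) and x'(v) = x(v) otherwise also satisfies f(x') ≥ f(y) for every assignment y : V → Fin k. -/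
open Finset

variable {V : Type*} [Fintype V]

/-- Collecting all vertices of a given score into one group preserves optimality. -/
theorem collect_score_class_preserves_optimality (s : V → ℤ × ℤ × ℤ) (k : ℕ) (hk : 1 ≤ k)
    (x : V → Fin k) (hopt : ∀ y : V → Fin k, objf s x ≥ objf s y) (i : V) :
    ∀ y : V → Fin k, objf s (fun v => if s v = s i then x i else x v) ≥ objf s y := by
  classical
  intro y
  set A : Finset V := univ.filter (fun v => s v = s i) with hA
  set B : Finset V := univ.filter (fun v => ¬ s v = s i) with hB
  have wgt_congr : ∀ v w : V, s v = s i → wgt s v w = wgt s i w := by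
    intro v w h; simp [wgt, h]
  have wgt_symm : ∀ v w : V, wgt s v w = wgt s w v := by
    intro v w; simp only [wgt]
    rw [abs_sub_comm ((s v).1), abs_sub_comm ((s v).2.1), abs_sub_comm ((s v).2.2)]
  have wgt_zero : ∀ v w : V, s v = s w → wgt s v w = 0 := by
    intro v w h; simp [wgt, h]
  set G : Fin k → ℤ := fun c => ∑ w ∈ B, (if c ≠ x w then wgt s i w else 0) with hG
  set K : ℤ := ∑ v ∈ B, ∑ w ∈ B, (if x v ≠ x w then wgt s v w else 0) with hK
  have hsplit : ∀ F : V → ℤ, ∑ v, F v = ∑ v ∈ A, F v + ∑ v ∈ B, F v := by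
    intro F; rw [hA, hB, Finset.sum_filter_add_sum_filter_not]
  have decomp : ∀ z : V → Fin k, (∀ v, ¬ s v = s i → z v = x v) →
      objf s z = 2 * (∑ v ∈ A, G (z v)) + K := by
    intro z hz
    have hAA : ∑ v ∈ A, ∑ w ∈ A, (if z v ≠ z w then wgt s v w else 0) = 0 := by
      apply Finset.sum_eq_zero; intro v hv
      apply Finset.sum_eq_zero; intro w hw
      rw [hA, Finset.mem_filter] at hv hw
      rw [wgt_zero v w (hv.2.trans hw.2.symm)]
      exact ite_self 0
    have hAB : ∑ v ∈ A, ∑ w ∈ B, (if z v ≠ z w then wgt s v w else 0)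
        = ∑ v ∈ A, G (z v) := by
      apply Finset.sum_congr rfl; intro v hv
      rw [hG]
      apply Finset.sum_congr rfl; intro w hw
      rw [hA, Finset.mem_filter] at hv
      rw [hB, Finset.mem_filter] at hw
      rw [hz w hw.2, wgt_congr v w hv.2]
    have hBA : ∑ v ∈ B, ∑ w ∈ A, (if z v ≠ z w then wgt s v w else 0)
        = ∑ v ∈ A, G (z v) := by
      rw [Finset.sum_comm]
      apply Finset.sum_congr rfl; intro v hv
      rw [hG]
      apply Finset.sum_congr rfl; intro w hw
      rw [hA, Finset.mem_filter] at hv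
      rw [hB, Finset.mem_filter] at hw
      rw [hz w hw.2, wgt_symm w v, wgt_congr v w hv.2]
      exact if_congr ne_comm rfl rfl
    have hBB : ∑ v ∈ B, ∑ w ∈ B, (if z v ≠ z w then wgt s v w else 0) = K := by
      rw [hK]
      apply Finset.sum_congr rfl; intro v hv
      apply Finset.sum_congr rfl; intro w hw
      rw [hB, Finset.mem_filter] at hv hw
      rw [hz v hv.2, hz w hw.2]
    calc objf s z
        = ∑ v ∈ A, (∑ w ∈ A, (if z v ≠ z w then wgt s v w else 0)
              + ∑ w ∈ B, (if z v ≠ z w then wgt s v w else 0))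
          + ∑ v ∈ B, (∑ w ∈ A, (if z v ≠ z w then wgt s v w else 0)
              + ∑ w ∈ B, (if z v ≠ z w then wgt s v w else 0)) := by
          rw [objf, hsplit]
          exact congrArg₂ (· + ·) (Finset.sum_congr rfl fun v _ => hsplit _)
            (Finset.sum_congr rfl fun v _ => hsplit _)
      _ = (∑ v ∈ A, ∑ w ∈ A, (if z v ≠ z w then wgt s v w else 0)
            + ∑ v ∈ A, ∑ w ∈ B, (if z v ≠ z w then wgt s v w else 0))
          + (∑ v ∈ B, ∑ w ∈ A, (if z v ≠ z w then wgt s v w else 0)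
            + ∑ v ∈ B, ∑ w ∈ B, (if z v ≠ z w then wgt s v w else 0)) := by
          rw [Finset.sum_add_distrib, Finset.sum_add_distrib]
      _ = 2 * (∑ v ∈ A, G (z v)) + K := by rw [hAA, hAB, hBA, hBB]; ring
  have hiA : i ∈ A := by simp [hA]
  have hdx : objf s x = 2 * (∑ v ∈ A, G (x v)) + K := decomp x (fun v _ => rfl)
  have hdc : ∀ c : Fin k, objf s (fun v => if s v = s i then c else x v)
      = 2 * ((A.card : ℤ) * G c) + K := by
    intro c
    rw [decomp _ (fun v hv => if_neg hv)]
    have : ∑ v ∈ A, G (if s v = s i then c else x v) = ∑ v ∈ A, G c := by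
      apply Finset.sum_congr rfl; intro v hv
      rw [hA, Finset.mem_filter] at hv
      rw [if_pos hv.2]
    rw [this, Finset.sum_const, nsmul_eq_mul]
  obtain ⟨v₀, hv₀A, hmax⟩ := A.exists_max_image (fun v => G (x v)) ⟨i, hiA⟩
  have hle : (A.card : ℤ) * G (x v₀) ≤ ∑ v ∈ A, G (x v) := by
    have h := hopt (fun v => if s v = s i then x v₀ else x v)
    rw [hdc (x v₀), hdx] at h
    linarith
  have hub : ∑ v ∈ A, G (x v) ≤ (A.card : ℤ) * G (x v₀) := by
    calc ∑ v ∈ A, G (x v) ≤ ∑ _v ∈ A, G (x v₀) := Finset.sum_le_sum hmax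
      _ = (A.card : ℤ) * G (x v₀) := by rw [Finset.sum_const, nsmul_eq_mul]
  have heq : ∑ v ∈ A, G (x v) = (A.card : ℤ) * G (x v₀) := le_antisymm hub hle
  have hsum0 : ∑ v ∈ A, (G (x v₀) - G (x v)) = 0 := by
    rw [Finset.sum_sub_distrib, Finset.sum_const, nsmul_eq_mul, heq]; ring
  have hGi : G (x i) = G (x v₀) := by
    have h0 := (Finset.sum_eq_zero_iff_of_nonneg
      (fun u hu => sub_nonneg.2 (hmax u hu))).1 hsum0 i hiA
    linarith
  have hfinal : objf s (fun v => if s v = s i then x i else x v) = objf s x := by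
    rw [hdc (x i), hdx, hGi, heq]
  rw [hfinal]
  exact hopt y
end
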